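/- Let a_k(n+1) denote the number of permutations w of {1,...,n+1} with as(w) = k. Then for 1 ≤ k ≤ n+1, a_k(n+1) = Σ_{j=0}^{n} C(n,j) Σ_{2r+s=k-1, r,s≥0} (a_{2r}(j) + a_{2r+1}(j)) a_s(n-j), with initial condition a_0(0) = 1. -/

import Mathlib

/-- The list of values of a permutation of `Fin n` (0-indexed; relative order
is what matters). -/
def permList (n : ℕ) (w : Equiv.Perm (Fin n)) : List ℕ :=
  List.ofFn (fun i => (w i : ℕ))

/-- A list is alternating: `a > b < c > d < ⋯` (descents in even positions). -/
def IsAlt (l : List ℕ) : Prop :=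
  ∀ i : ℕ, ∀ hi : i + 1 < l.length,
    if i % 2 = 0 then l.get ⟨i + 1, hi⟩ < l.get ⟨i, Nat.lt_of_succ_lt hi⟩
    else l.get ⟨i, Nat.lt_of_succ_lt hi⟩ < l.get ⟨i + 1, hi⟩

/-- `asLen n w` : the maximum length of an alternating subsequence of `w`. -/
noncomputable def asLen (n : ℕ) (w : Equiv.Perm (Fin n)) : ℕ :=
  sSup {k | ∃ l : List ℕ, l.Sublist (permList n w) ∧ IsAlt l ∧ l.length = k}

/-- `aCount n k = #{w ∈ S_n : as(w) = k}`. -/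
noncomputable def aCount (n k : ℕ) : ℕ :=
  Nat.card {w : Equiv.Perm (Fin n) // asLen n w = k}

/-- `bCount n k = #{w ∈ S_n : as(w) ≤ k}`. -/
noncomputable def bCount (n k : ℕ) : ℕ :=
  Nat.card {w : Equiv.Perm (Fin n) // asLen n w ≤ k}

/-- Alternating with a parity offset `e`: at positions `i` with `(i+e)` even we have a
descent, otherwise an ascent. `AltAux 0 = IsAlt`. -/
def AltAux (e : ℕ) (l : List ℕ) : Prop :=
  ∀ i : ℕ, ∀ hi : i + 1 < l.length,
    if (i + e) % 2 = 0 then l.get ⟨i + 1, hi⟩ < l.get ⟨i, Nat.lt_of_succ_lt hi⟩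
    else l.get ⟨i, Nat.lt_of_succ_lt hi⟩ < l.get ⟨i + 1, hi⟩

lemma isAlt_iff_altAux {l : List ℕ} : IsAlt l ↔ AltAux 0 l := Iff.rfl

lemma altAux_congr_parity {e e' : ℕ} (h : e % 2 = e' % 2) {l : List ℕ} :
    AltAux e l ↔ AltAux e' l := by
  unfold AltAux
  constructor <;> intro H i hi <;> have := H i hi <;>
    [skip; skip] <;> (rw [show (i + e) % 2 = (i + e') % 2 by omega] at * <;> exact this)

def altSet (e : ℕ) (l : List ℕ) : Set ℕ :=
  {k | ∃ m : List ℕ, m.Sublist l ∧ AltAux e m ∧ m.length = k}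

noncomputable def altLen (e : ℕ) (l : List ℕ) : ℕ := sSup (altSet e l)

lemma altAux_nil (e : ℕ) : AltAux e [] := by intro i hi; simp at hi

lemma altSet_nonempty (e : ℕ) (l : List ℕ) : (altSet e l).Nonempty :=
  ⟨0, [], List.nil_sublist l, altAux_nil e, rfl⟩

lemma altSet_bddAbove (e : ℕ) (l : List ℕ) : BddAbove (altSet e l) := by
  refine ⟨l.length, fun k hk => ?_⟩
  obtain ⟨m, hm, -, rfl⟩ := hk
  exact hm.length_le

lemma altLen_mem (e : ℕ) (l : List ℕ) : altLen e l ∈ altSet e l :=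
  Nat.sSup_mem (altSet_nonempty e l) (altSet_bddAbove e l)

lemma le_altLen {e : ℕ} {l m : List ℕ} (hm : m.Sublist l) (ha : AltAux e m) :
    m.length ≤ altLen e l :=
  le_csSup (altSet_bddAbove e l) ⟨m, hm, ha, rfl⟩

lemma altLen_le {e : ℕ} {l : List ℕ} {c : ℕ}
    (h : ∀ m : List ℕ, m.Sublist l → AltAux e m → m.length ≤ c) :
    altLen e l ≤ c := by
  apply csSup_le (altSet_nonempty e l)
  rintro k ⟨m, hm, ha, rfl⟩
  exact h m hm ha

lemma asLen_eq_altLen (n : ℕ) (w : Equiv.Perm (Fin n)) :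
    asLen n w = altLen 0 (permList n w) := rfl

lemma altAux_iff {e : ℕ} {l : List ℕ} :
    AltAux e l ↔ ∀ i : ℕ, ∀ hi : i + 1 < l.length,
      if (i + e) % 2 = 0 then l[i+1] < l[i]'(Nat.lt_of_succ_lt hi)
      else l[i]'(Nat.lt_of_succ_lt hi) < l[i+1] := by
  simp only [AltAux, List.get_eq_getElem]

lemma altAux_take {e t : ℕ} {l : List ℕ} (h : AltAux e l) : AltAux e (l.take t) := by
  rw [altAux_iff] at h ⊢
  intro i hi
  have h1 : i + 1 < l.length := by
    have := hi; simp [List.length_take] at this; omega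
  have := h i h1
  simpa [List.getElem_take] using this

lemma altAux_drop {e t : ℕ} {l : List ℕ} (h : AltAux e l) : AltAux (t + e) (l.drop t) := by
  rw [altAux_iff] at h ⊢
  intro i hi
  have h1 : (t + i) + 1 < l.length := by
    have := hi; simp [List.length_drop] at this; omega
  have := h (t + i) h1
  have hpar : (t + i + e) % 2 = (i + (t + e)) % 2 := by omega
  rw [hpar] at this
  simpa [List.getElem_drop, Nat.add_assoc] using this

lemma altAux_append_split {e : ℕ} {γ δ : List ℕ} (h : AltAux e (γ ++ δ)) :
    AltAux e γ ∧ AltAux (γ.length + e) δ := by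
  constructor
  · have := altAux_take (t := γ.length) h
    rwa [List.take_left] at this
  · have := altAux_drop (t := γ.length) h
    rwa [List.drop_left] at this

lemma altAux_tail {e : ℕ} {l : List ℕ} (h : AltAux e l) : AltAux (e + 1) (l.drop 1) := by
  have := altAux_drop (t := 1) h
  rwa [altAux_congr_parity (e' := e + 1) (by omega)] at this


lemma getElem_append_mid {α β : List ℕ} {M : ℕ} {j : ℕ}
    (hj : j < (α ++ M :: β).length) :
    (α ++ M :: β)[j] = if h : j < α.length then α[j] else if h2 : j = α.length then M
        else β[j - α.length - 1]'(by simp at hj; omega) := by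
  split
  · next h => exact List.getElem_append_left h
  · next h =>
    rw [List.getElem_append_right (by omega)]
    split
    · next h2 => simp [h2]
    · next h2 =>
      obtain ⟨s, hs⟩ : ∃ s, j - α.length = s + 1 := ⟨j - α.length - 1, by omega⟩
      simp only [hs, List.getElem_cons_succ, Nat.add_sub_cancel]

/-- Gluing: an even-length descent-starting alternating list, then a maximum, then an
ascent-starting alternating list. -/
lemma altAux_append_max {α β : List ℕ} {M : ℕ} (hα : AltAux 0 α) (hev : α.length % 2 = 0)
    (hβ : AltAux 1 β) (hαM : ∀ x ∈ α, x < M) (hβM : ∀ x ∈ β, x < M) :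
    AltAux 0 (α ++ M :: β) := by
  rw [altAux_iff] at hα hβ ⊢
  intro i hi
  have hlen : (α ++ M :: β).length = α.length + β.length + 1 := by simp; omega
  rw [getElem_append_mid (Nat.lt_of_succ_lt hi), getElem_append_mid hi]
  rcases lt_trichotomy (i+1) α.length with h1 | h1 | h1
  · -- both in α
    simp only [dif_pos (show i < α.length by omega), dif_pos h1]
    have := hα i (by omega)
    simpa using this
  · -- i+1 = α.length : second element is M; i is odd since α.length is even and positive
    simp only [dif_pos (show i < α.length by omega), dif_neg (show ¬ i + 1 < α.length by omega),
      dif_pos h1]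
    rw [if_neg (show ¬ (i + 0) % 2 = 0 by omega)]
    exact hαM _ (List.getElem_mem _)
  · rcases Nat.lt_or_ge α.length i with h2 | h2
    · -- both in β
      simp only [dif_neg (show ¬ i < α.length by omega),
        dif_neg (show ¬ i + 1 < α.length by omega),
        dif_neg (show ¬ i = α.length by omega), dif_neg (show ¬ i + 1 = α.length by omega)]
      have hb : (i - α.length - 1) + 1 < β.length := by rw [hlen] at hi; omega
      have := hβ (i - α.length - 1) hb
      rw [show (i - α.length - 1 + 1) % 2 = (i + 0) % 2 from by omega] at this
      simp only [show i + 1 - α.length - 1 = (i - α.length - 1) + 1 from by omega]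
      split
      · next hp => rwa [if_pos hp] at this
      · next hp => rwa [if_neg hp] at this
    · -- i = α.length: first element is M, second is β[0]
      have hiL : i = α.length := by omega
      simp only [dif_neg (show ¬ i < α.length by omega),
        dif_neg (show ¬ i + 1 < α.length by omega), dif_pos hiL,
        dif_neg (show ¬ i + 1 = α.length by omega)]
      rw [if_pos (show (i + 0) % 2 = 0 by omega)]
      exact hβM _ (List.getElem_mem _)

/-- Decomposition around a maximal element. -/
lemma altAux_append_max_rev {α β : List ℕ} {M : ℕ} (h : AltAux 0 (α ++ M :: β))
    (hαM : ∀ x ∈ α, x < M) :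
    α.length % 2 = 0 ∧ AltAux 0 α ∧ AltAux 1 β := by
  obtain ⟨hA, hB⟩ := altAux_append_split h
  have hev : α.length % 2 = 0 := by
    by_contra hodd
    have hL1 : 1 ≤ α.length := by omega
    rw [altAux_iff] at h
    have hlt : (α.length - 1) + 1 < (α ++ M :: β).length := by simp; omega
    have := h (α.length - 1) hlt
    rw [if_pos (by omega)] at this
    have e1 : (α ++ M :: β)[α.length - 1 + 1] = M := by
      rw [getElem_append_mid hlt, dif_neg (by omega), dif_pos (by omega)]
    have e2 : (α ++ M :: β)[α.length - 1]'(Nat.lt_of_succ_lt hlt) = α[α.length - 1]'(by omega) := by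
      rw [getElem_append_mid (Nat.lt_of_succ_lt hlt), dif_pos (by omega)]
    rw [e1, e2] at this
    exact absurd this (Nat.not_lt.mpr (le_of_lt (hαM _ (List.getElem_mem _))))
  refine ⟨hev, hA, ?_⟩
  have := altAux_tail (e := α.length + 0) hB
  rw [List.drop_one, List.tail_cons] at this
  rwa [altAux_congr_parity (e' := 1) (by omega)] at this

lemma altLen_le_of_map {l l' : List ℕ} (hlen : l.length = l'.length) {rev : Bool}
    {e e' : ℕ}
    (hpar : if rev then (e + e') % 2 = 1 else e % 2 = e' % 2)
    (hcmp : ∀ i j : ℕ, ∀ hi : i < l.length, ∀ hj : j < l.length,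
      l[i] < l[j] → if rev then l'[j]'(hlen ▸ hj) < l'[i]'(hlen ▸ hi)
        else l'[i]'(hlen ▸ hi) < l'[j]'(hlen ▸ hj)) :
    altLen e l ≤ altLen e' l' := by
  obtain ⟨m, hm, ha, hlenm⟩ := altLen_mem e l
  rw [← hlenm]
  rw [List.sublist_iff_exists_fin_orderEmbedding_get_eq] at hm
  obtain ⟨f, hf⟩ := hm
  set m' : List ℕ := List.ofFn (fun ix : Fin m.length => l'.get (Fin.cast hlen (f ix))) with hm'
  have hm'len : m'.length = m.length := by simp [hm']
  have hmval : ∀ i (h : i < m.length), m[i] = l[(f ⟨i, h⟩ : Fin l.length).1] := by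
    intro i h
    have := hf ⟨i, h⟩
    simpa [List.get_eq_getElem] using this
  have hm'val : ∀ i (h : i < m'.length),
      m'[i] = l'[(f ⟨i, hm'len ▸ h⟩ : Fin l.length).1]'(by rw [← hlen]; exact (f _).2) := by
    intro i h
    simp [hm', List.get_eq_getElem]
  have hsub : m'.Sublist l' := by
    rw [List.sublist_iff_exists_fin_orderEmbedding_get_eq]
    refine ⟨OrderEmbedding.ofStrictMono
      (fun ix => Fin.cast hlen (f (Fin.cast hm'len ix))) ?_, ?_⟩
    · intro a b hab
      have h1 : Fin.cast hm'len a < Fin.cast hm'len b := by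
        rw [Fin.lt_def] at hab ⊢; exact hab
      have h2 := f.strictMono h1
      rw [Fin.lt_def] at h2 ⊢
      exact h2
    · intro ix
      show (List.ofFn fun ix => l'.get (Fin.cast hlen (f ix))).get ix = _
      rw [List.get_ofFn]
      rfl
  have halt : AltAux e' m' := by
    rw [altAux_iff]
    intro i hi
    have hi2 : i + 1 < m.length := hm'len ▸ hi
    have ham := (altAux_iff.mp ha) i hi2
    rw [hm'val i (Nat.lt_of_succ_lt hi), hm'val (i+1) hi]
    rw [hmval i (Nat.lt_of_succ_lt hi2), hmval (i+1) hi2] at ham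
    cases rev with
    | true =>
      have hpar' : (e + e') % 2 = 1 := by rwa [if_pos rfl] at hpar
      have hcmp' : ∀ (i j : ℕ) (hi : i < l.length) (hj : j < l.length),
          l[i] < l[j] → l'[j]'(hlen ▸ hj) < l'[i]'(hlen ▸ hi) := by
        intro i j hi hj h
        have := hcmp i j hi hj h
        rwa [if_pos rfl] at this
      by_cases hp : (i + e) % 2 = 0
      · rw [if_pos hp] at ham
        rw [if_neg (by omega)]
        exact hcmp' _ _ _ _ ham
      · rw [if_neg hp] at ham
        rw [if_pos (by omega)]
        exact hcmp' _ _ _ _ ham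
    | false =>
      have hpar' : e % 2 = e' % 2 := by rwa [if_neg (by simp)] at hpar
      have hcmp' : ∀ (i j : ℕ) (hi : i < l.length) (hj : j < l.length),
          l[i] < l[j] → l'[i]'(hlen ▸ hi) < l'[j]'(hlen ▸ hj) := by
        intro i j hi hj h
        have := hcmp i j hi hj h
        rwa [if_neg (by simp)] at this
      by_cases hp : (i + e) % 2 = 0
      · rw [if_pos hp] at ham
        rw [if_pos (by omega)]
        exact hcmp' _ _ _ _ ham
      · rw [if_neg hp] at ham
        rw [if_neg (by omega)]
        exact hcmp' _ _ _ _ ham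
  calc m.length = m'.length := hm'len.symm
    _ ≤ altLen e' l' := le_altLen hsub halt

lemma altLen_zero_le_one_succ (v : List ℕ) : altLen 0 v ≤ altLen 1 v + 1 := by
  obtain ⟨m, hm, ha, hlenm⟩ := altLen_mem 0 v
  have := altAux_tail (e := 0) ha
  have hsub : (m.drop 1).Sublist v := (List.drop_sublist 1 m).trans hm
  have hlen : (m.drop 1).length = m.length - 1 := by simp
  have h2 := le_altLen hsub this
  rw [Nat.zero_add] at h2
  omega

lemma exists_even_alt (u : List ℕ) :
    ∃ α : List ℕ, α.Sublist u ∧ AltAux 0 α ∧ α.length = 2 * (altLen 0 u / 2) := by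
  obtain ⟨m, hm, ha, hlenm⟩ := altLen_mem 0 u
  refine ⟨m.take (2 * (altLen 0 u / 2)), (List.take_sublist _ _).trans hm, altAux_take ha, ?_⟩
  rw [List.length_take]
  omega

/-- The key lemma: longest alternating subsequence of `u ++ M :: v` where `M` dominates. -/
lemma altLen_append_max {u v : List ℕ} {M : ℕ} (hu : ∀ x ∈ u, x < M) (hv : ∀ x ∈ v, x < M) :
    altLen 0 (u ++ M :: v) = 2 * (altLen 0 u / 2) + 1 + altLen 1 v := by
  apply le_antisymm
  · apply altLen_le
    intro m hm ha
    rw [List.sublist_append_iff] at hm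
    obtain ⟨γ, δ, rfl, hγ, hδ⟩ := hm
    have hγu : ∀ x ∈ γ, x < M := fun x hx => hu x (hγ.subset hx)
    rw [List.sublist_cons_iff] at hδ
    rcases hδ with hδ | ⟨β, rfl, hβ⟩
    · -- M unused
      obtain ⟨hA, hB⟩ := altAux_append_split ha
      have hγlen : γ.length ≤ altLen 0 u := le_altLen hγ hA
      by_cases hev : γ.length % 2 = 0
      · rw [altAux_congr_parity (e' := 0) (by omega)] at hB
        have hδlen : δ.length ≤ altLen 0 v := le_altLen hδ hB
        have := altLen_zero_le_one_succ v
        rw [List.length_append]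
        omega
      · rw [altAux_congr_parity (e' := 1) (by omega)] at hB
        have hδlen : δ.length ≤ altLen 1 v := le_altLen hδ hB
        rw [List.length_append]
        omega
    · -- M used
      obtain ⟨hev, hA, hB⟩ := altAux_append_max_rev ha hγu
      have hγlen : γ.length ≤ altLen 0 u := le_altLen hγ hA
      have hβlen : β.length ≤ altLen 1 v := le_altLen hβ hB
      rw [List.length_append, List.length_cons]
      omega
  · obtain ⟨α, hαu, hαalt, hαlen⟩ := exists_even_alt u
    obtain ⟨β, hβv, hβalt, hβlen⟩ := altLen_mem 1 v
    have hglue : AltAux 0 (α ++ M :: β) :=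
      altAux_append_max hαalt (by omega) hβalt
        (fun x hx => hu x (hαu.subset hx)) (fun x hx => hv x (hβv.subset hx))
    have hsub : (α ++ M :: β).Sublist (u ++ M :: v) :=
      List.Sublist.append hαu ((hβv.cons_cons M))
    have := le_altLen hsub hglue
    rw [List.length_append, List.length_cons] at this
    omega

lemma permList_length (q : ℕ) (v : Equiv.Perm (Fin q)) : (permList q v).length = q := by
  simp [permList]

lemma permList_getElem (q : ℕ) (v : Equiv.Perm (Fin q)) (i : ℕ)
    (h : i < (permList q v).length) :
    (permList q v)[i] = (v ⟨i, by simpa [permList_length] using h⟩ : ℕ) := by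
  simp [permList]

lemma asLen_rev (q : ℕ) (v : Equiv.Perm (Fin q)) :
    asLen q (v.trans Fin.revPerm) = altLen 1 (permList q v) := by
  rw [asLen_eq_altLen]
  have hlen : (permList q (v.trans Fin.revPerm)).length = (permList q v).length := by
    simp [permList_length]
  apply le_antisymm
  · apply altLen_le_of_map hlen (rev := true) (by norm_num)
    intro i j hi hj hij
    rw [if_pos rfl]
    rw [permList_getElem, permList_getElem] at hij
    rw [permList_getElem, permList_getElem]
    simp only [Equiv.trans_apply, Fin.revPerm_apply] at hij
    exact Fin.rev_lt_rev.mp hij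
  · apply altLen_le_of_map hlen.symm (rev := true) (by norm_num)
    intro i j hi hj hij
    rw [if_pos rfl]
    rw [permList_getElem, permList_getElem] at hij
    rw [permList_getElem, permList_getElem]
    simp only [Equiv.trans_apply, Fin.revPerm_apply]
    exact Fin.rev_lt_rev.mpr hij

noncomputable def revEquiv (q : ℕ) : Equiv.Perm (Fin q) ≃ Equiv.Perm (Fin q) where
  toFun v := v.trans Fin.revPerm
  invFun v := v.trans Fin.revPerm
  left_inv v := by
    ext x
    simp [Fin.rev_rev]
  right_inv v := by
    ext x
    simp [Fin.rev_rev]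

lemma card_altLen_one (q s : ℕ) :
    Nat.card {v : Equiv.Perm (Fin q) // altLen 1 (permList q v) = s} = aCount q s := by
  unfold aCount
  apply Nat.card_congr
  exact Equiv.subtypeEquiv (revEquiv q) (fun v => by
    rw [show asLen q ((revEquiv q) v) = altLen 1 (permList q v) from asLen_rev q v])

lemma aCount_zero_zero : aCount 0 0 = 1 := by
  unfold aCount
  have h : ∀ w : Equiv.Perm (Fin 0), asLen 0 w = 0 := by
    intro w
    rw [asLen_eq_altLen]
    refine Nat.le_antisymm ?_ (Nat.zero_le _)
    apply altLen_le
    intro m hm _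
    have hnil : permList 0 w = [] := by simp [permList]
    rw [hnil, List.sublist_nil] at hm
    simp [hm]
  rw [Nat.card_congr (Equiv.subtypeUnivEquiv h)]
  simp [Nat.card_eq_fintype_card]

lemma filter_asLen_card (a s : ℕ) [DecidablePred fun u : Equiv.Perm (Fin a) => asLen a u = s] :
    (Finset.univ.filter (fun u : Equiv.Perm (Fin a) => asLen a u = s)).card = aCount a s := by
  rw [aCount, Nat.card_eq_fintype_card, Fintype.card_subtype]

lemma inner_count (a b k : ℕ) (hk : 1 ≤ k) :
    (Finset.univ.filter (fun p : Equiv.Perm (Fin a) × Equiv.Perm (Fin b) =>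
        2 * (asLen a p.1 / 2) + 1 + altLen 1 (permList b p.2) = k)).card
      = ∑ r ∈ Finset.range ((k - 1) / 2 + 1),
          (aCount a (2 * r) + aCount a (2 * r + 1)) * aCount b (k - 1 - 2 * r) := by
  classical
  rw [Finset.card_eq_sum_card_fiberwise (f := fun p => asLen a p.1 / 2)
    (t := Finset.range ((k - 1) / 2 + 1))
    (by
      intro p hp
      simp only [Finset.mem_coe, Finset.mem_filter] at hp
      simp only [Finset.mem_coe, Finset.mem_range]
      omega)]
  refine Finset.sum_congr rfl ?_
  intro r hr
  simp only [Finset.mem_range] at hr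
  rw [Finset.filter_filter]
  have hsplit : (Finset.univ.filter (fun p : Equiv.Perm (Fin a) × Equiv.Perm (Fin b) =>
      (2 * (asLen a p.1 / 2) + 1 + altLen 1 (permList b p.2) = k) ∧ asLen a p.1 / 2 = r))
      = (Finset.univ.filter (fun u : Equiv.Perm (Fin a) => asLen a u / 2 = r)) ×ˢ
        (Finset.univ.filter (fun v : Equiv.Perm (Fin b) =>
          altLen 1 (permList b v) = k - 1 - 2 * r)) := by
    ext p
    simp only [Finset.mem_filter, Finset.mem_univ, true_and, Finset.mem_product]
    omega
  rw [hsplit, Finset.card_product]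
  congr 1
  · -- card of {u : asLen/2 = r} = aCount a (2r) + aCount a (2r+1)
    have : (Finset.univ.filter (fun u : Equiv.Perm (Fin a) => asLen a u / 2 = r))
        = (Finset.univ.filter (fun u : Equiv.Perm (Fin a) => asLen a u = 2 * r)) ∪
          (Finset.univ.filter (fun u : Equiv.Perm (Fin a) => asLen a u = 2 * r + 1)) := by
      rw [← Finset.filter_or]
      apply Finset.filter_congr
      intro u _
      constructor
      · intro h; omega
      · intro h; omega
    rw [this, Finset.card_union_of_disjoint, filter_asLen_card, filter_asLen_card]
    rw [Finset.disjoint_left]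
    intro u h1 h2
    simp only [Finset.mem_filter] at h1 h2
    omega
  · rw [← card_altLen_one b (k - 1 - 2 * r), Nat.card_eq_fintype_card, Fintype.card_subtype]

section Psi

open Finset Equiv

variable {n j : ℕ}

/-- The raw function underlying `psi`. -/
noncomputable def psiFun (hj : j ≤ n) (S : Finset (Fin (n+1))) (hcard : S.card = j)
    (hcardT : ((Finset.univ.erase (Fin.last n)) \ S).card = n - j)
    (u : Equiv.Perm (Fin j)) (v : Equiv.Perm (Fin (n - j))) (i : Fin (n+1)) : Fin (n+1) :=
  if h : (i : ℕ) < j then ((S.orderIsoOfFin hcard (u ⟨i, h⟩) : Fin (n+1)))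
  else if h2 : (i : ℕ) = j then Fin.last n
  else (((Finset.univ.erase (Fin.last n)) \ S).orderIsoOfFin hcardT
    (v ⟨(i : ℕ) - j - 1, by have := i.isLt; omega⟩) : Fin (n+1))

lemma psiFun_apply_lt (hj : j ≤ n) (S : Finset (Fin (n+1))) (hcard : S.card = j)
    (hcardT : ((Finset.univ.erase (Fin.last n)) \ S).card = n - j)
    (u : Equiv.Perm (Fin j)) (v : Equiv.Perm (Fin (n - j))) (i : Fin (n+1))
    (h : (i : ℕ) < j) :
    psiFun hj S hcard hcardT u v i = (S.orderIsoOfFin hcard (u ⟨i, h⟩) : Fin (n+1)) := by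
  unfold psiFun; rw [dif_pos h]

lemma psiFun_apply_eq (hj : j ≤ n) (S : Finset (Fin (n+1))) (hcard : S.card = j)
    (hcardT : ((Finset.univ.erase (Fin.last n)) \ S).card = n - j)
    (u : Equiv.Perm (Fin j)) (v : Equiv.Perm (Fin (n - j))) (i : Fin (n+1))
    (h : (i : ℕ) = j) :
    psiFun hj S hcard hcardT u v i = Fin.last n := by
  unfold psiFun; rw [dif_neg (by omega), dif_pos h]

lemma psiFun_apply_gt (hj : j ≤ n) (S : Finset (Fin (n+1))) (hcard : S.card = j)
    (hcardT : ((Finset.univ.erase (Fin.last n)) \ S).card = n - j)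
    (u : Equiv.Perm (Fin j)) (v : Equiv.Perm (Fin (n - j))) (i : Fin (n+1))
    (h : j < (i : ℕ)) (pf : (i : ℕ) - j - 1 < n - j) :
    psiFun hj S hcard hcardT u v i
      = (((Finset.univ.erase (Fin.last n)) \ S).orderIsoOfFin hcardT
          (v ⟨(i : ℕ) - j - 1, pf⟩) : Fin (n+1)) := by
  unfold psiFun; rw [dif_neg (by omega), dif_neg (by omega)]

lemma psiFun_injective (hj : j ≤ n) (S : Finset (Fin (n+1))) (hcard : S.card = j)
    (hcardT : ((Finset.univ.erase (Fin.last n)) \ S).card = n - j)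
    (hLS : Fin.last n ∉ S)
    (u : Equiv.Perm (Fin j)) (v : Equiv.Perm (Fin (n - j))) :
    Function.Injective (psiFun hj S hcard hcardT u v) := by
  classical
  intro i1 i2 heq
  have hmemS : ∀ x, ((S.orderIsoOfFin hcard x : Fin (n+1))) ∈ S := fun x =>
    (S.orderIsoOfFin hcard x).2
  have hmemT : ∀ x, ((((Finset.univ.erase (Fin.last n)) \ S).orderIsoOfFin hcardT x : Fin (n+1)))
      ∈ (Finset.univ.erase (Fin.last n)) \ S := fun x =>
    (((Finset.univ.erase (Fin.last n)) \ S).orderIsoOfFin hcardT x).2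
  have hi1 := i1.isLt
  have hi2 := i2.isLt
  rcases lt_trichotomy (i1 : ℕ) j with c1 | c1 | c1 <;>
    rcases lt_trichotomy (i2 : ℕ) j with c2 | c2 | c2
  · rw [psiFun_apply_lt hj S hcard hcardT u v i1 c1,
      psiFun_apply_lt hj S hcard hcardT u v i2 c2] at heq
    have h2 := (S.orderIsoOfFin hcard).injective (Subtype.coe_injective heq)
    have h3 := u.injective h2
    exact Fin.ext (by simpa using congrArg Fin.val h3)
  · rw [psiFun_apply_lt hj S hcard hcardT u v i1 c1,
      psiFun_apply_eq hj S hcard hcardT u v i2 c2] at heq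
    exact absurd (heq ▸ hmemS _) hLS
  · rw [psiFun_apply_lt hj S hcard hcardT u v i1 c1,
      psiFun_apply_gt hj S hcard hcardT u v i2 c2 (by omega)] at heq
    exact absurd (heq ▸ hmemS _) (Finset.mem_sdiff.mp (hmemT _)).2
  · rw [psiFun_apply_eq hj S hcard hcardT u v i1 c1,
      psiFun_apply_lt hj S hcard hcardT u v i2 c2] at heq
    exact absurd (heq.symm ▸ hmemS _) hLS
  · exact Fin.ext (by omega)
  · rw [psiFun_apply_eq hj S hcard hcardT u v i1 c1,
      psiFun_apply_gt hj S hcard hcardT u v i2 c2 (by omega)] at heq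
    exact absurd heq.symm
      (Finset.mem_erase.mp (Finset.mem_sdiff.mp (hmemT _)).1).1
  · rw [psiFun_apply_gt hj S hcard hcardT u v i1 c1 (by omega),
      psiFun_apply_lt hj S hcard hcardT u v i2 c2] at heq
    exact absurd (heq.symm ▸ hmemS _) (Finset.mem_sdiff.mp (hmemT _)).2
  · rw [psiFun_apply_gt hj S hcard hcardT u v i1 c1 (by omega),
      psiFun_apply_eq hj S hcard hcardT u v i2 c2] at heq
    exact absurd heq
      (Finset.mem_erase.mp (Finset.mem_sdiff.mp (hmemT _)).1).1
  · rw [psiFun_apply_gt hj S hcard hcardT u v i1 c1 (by omega),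
      psiFun_apply_gt hj S hcard hcardT u v i2 c2 (by omega)] at heq
    have h2 := (((Finset.univ.erase (Fin.last n)) \ S).orderIsoOfFin hcardT).injective
      (Subtype.coe_injective heq)
    have h3 := v.injective h2
    have h4 := congrArg Fin.val h3
    simp only at h4
    exact Fin.ext (by omega)

noncomputable def psi (hj : j ≤ n) (S : Finset (Fin (n+1))) (hcard : S.card = j)
    (hcardT : ((Finset.univ.erase (Fin.last n)) \ S).card = n - j)
    (hLS : Fin.last n ∉ S)
    (u : Equiv.Perm (Fin j)) (v : Equiv.Perm (Fin (n - j))) : Equiv.Perm (Fin (n+1)) :=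
  Equiv.ofBijective (psiFun hj S hcard hcardT u v)
    (Finite.injective_iff_bijective.mp (psiFun_injective hj S hcard hcardT hLS u v))

lemma psi_apply (hj : j ≤ n) (S : Finset (Fin (n+1))) (hcard : S.card = j)
    (hcardT : ((Finset.univ.erase (Fin.last n)) \ S).card = n - j)
    (hLS : Fin.last n ∉ S)
    (u : Equiv.Perm (Fin j)) (v : Equiv.Perm (Fin (n - j))) (i : Fin (n+1)) :
    psi hj S hcard hcardT hLS u v i = psiFun hj S hcard hcardT u v i := rfl

lemma altLen_ofFn_orderIso (q N e : ℕ) (R : Finset (Fin (N+1))) (hc : R.card = q)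
    (u : Equiv.Perm (Fin q)) :
    altLen e (List.ofFn (fun x : Fin q => ((R.orderIsoOfFin hc (u x) : Fin (N+1)) : ℕ)))
      = altLen e (permList q u) := by
  have hlen : (List.ofFn (fun x : Fin q => ((R.orderIsoOfFin hc (u x) : Fin (N+1)) : ℕ))).length
      = (permList q u).length := by simp [permList_length]
  apply le_antisymm
  · apply altLen_le_of_map hlen (rev := false) (by simp)
    intro i1 i2 hi hj hij
    rw [if_neg (by simp)]
    rw [List.getElem_ofFn, List.getElem_ofFn] at hij
    rw [permList_getElem, permList_getElem]
    have h1 : (R.orderIsoOfFin hc) (u ⟨i1, by simpa using hi⟩)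
        < (R.orderIsoOfFin hc) (u ⟨i2, by simpa using hj⟩) := by exact_mod_cast hij
    have h2 := (R.orderIsoOfFin hc).lt_iff_lt.mp h1
    exact_mod_cast h2
  · apply altLen_le_of_map hlen.symm (rev := false) (by simp)
    intro i1 i2 hi hj hij
    rw [if_neg (by simp)]
    rw [permList_getElem, permList_getElem] at hij
    rw [List.getElem_ofFn, List.getElem_ofFn]
    have h1 : u ⟨i1, by simpa [permList_length] using hi⟩
        < u ⟨i2, by simpa [permList_length] using hj⟩ := by exact_mod_cast hij
    have h2 := (R.orderIsoOfFin hc).lt_iff_lt.mpr h1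
    exact_mod_cast h2

lemma psi_permList (hj : j ≤ n) (S : Finset (Fin (n+1))) (hcard : S.card = j)
    (hcardT : ((Finset.univ.erase (Fin.last n)) \ S).card = n - j)
    (hLS : Fin.last n ∉ S)
    (u : Equiv.Perm (Fin j)) (v : Equiv.Perm (Fin (n - j))) :
    permList (n+1) (psi hj S hcard hcardT hLS u v)
      = (List.ofFn (fun x : Fin j => ((S.orderIsoOfFin hcard (u x) : Fin (n+1)) : ℕ)))
        ++ (n : ℕ) ::
        (List.ofFn (fun x : Fin (n-j) =>
          ((((Finset.univ.erase (Fin.last n)) \ S).orderIsoOfFin hcardT (v x) : Fin (n+1)) : ℕ))) := by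
  apply List.ext_getElem
  · simp [permList_length]
    omega
  · intro i hi hi'
    rw [permList_getElem]
    rw [getElem_append_mid]
    have hiv : i < n + 1 := by simpa [permList_length] using hi
    simp only [List.length_ofFn]
    rcases lt_trichotomy i j with c | c | c
    · rw [dif_pos c]
      rw [List.getElem_ofFn]
      have := psiFun_apply_lt hj S hcard hcardT u v ⟨i, hiv⟩ c
      rw [psi_apply, this]
    · rw [dif_neg (by omega), dif_pos c]
      have := psiFun_apply_eq hj S hcard hcardT u v ⟨i, hiv⟩ c
      rw [psi_apply, this]
      simp [Fin.val_last]
    · rw [dif_neg (by omega), dif_neg (by omega)]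
      rw [List.getElem_ofFn]
      have := psiFun_apply_gt hj S hcard hcardT u v ⟨i, hiv⟩ c (by omega)
      rw [psi_apply, this]

lemma psi_asLen (hj : j ≤ n) (S : Finset (Fin (n+1))) (hcard : S.card = j)
    (hcardT : ((Finset.univ.erase (Fin.last n)) \ S).card = n - j)
    (hLS : Fin.last n ∉ S) (hSsub : S ⊆ Finset.univ.erase (Fin.last n))
    (u : Equiv.Perm (Fin j)) (v : Equiv.Perm (Fin (n - j))) :
    asLen (n+1) (psi hj S hcard hcardT hLS u v)
      = 2 * (asLen j u / 2) + 1 + altLen 1 (permList (n-j) v) := by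
  rw [asLen_eq_altLen, psi_permList hj S hcard hcardT hLS u v]
  rw [altLen_append_max]
  · rw [altLen_ofFn_orderIso, altLen_ofFn_orderIso, ← asLen_eq_altLen]
  · intro x hx
    rw [List.mem_ofFn] at hx
    obtain ⟨y, rfl⟩ := hx
    have hmem : ((S.orderIsoOfFin hcard (u y) : Fin (n+1))) ∈ S := (S.orderIsoOfFin hcard (u y)).2
    have hne := Finset.ne_of_mem_erase (hSsub hmem)
    exact Fin.val_lt_last hne
  · intro x hx
    rw [List.mem_ofFn] at hx
    obtain ⟨y, rfl⟩ := hx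
    have hmem := (((Finset.univ.erase (Fin.last n)) \ S).orderIsoOfFin hcardT (v y)).2
    rw [Finset.mem_sdiff] at hmem
    have hne := Finset.ne_of_mem_erase hmem.1
    exact Fin.val_lt_last hne

lemma psi_symm_last (hj : j ≤ n) (S : Finset (Fin (n+1))) (hcard : S.card = j)
    (hcardT : ((Finset.univ.erase (Fin.last n)) \ S).card = n - j)
    (hLS : Fin.last n ∉ S)
    (u : Equiv.Perm (Fin j)) (v : Equiv.Perm (Fin (n - j))) :
    (((psi hj S hcard hcardT hLS u v).symm (Fin.last n)) : ℕ) = j := by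
  have h : psi hj S hcard hcardT hLS u v ⟨j, by omega⟩ = Fin.last n :=
    psiFun_apply_eq hj S hcard hcardT u v ⟨j, by omega⟩ rfl
  rw [(Equiv.symm_apply_eq _).mpr h.symm]

end Psi

/-- The set of values appearing before the maximal value `Fin.last n`. -/
def prefSet (n : ℕ) (w : Equiv.Perm (Fin (n+1))) : Finset (Fin (n+1)) :=
  (Finset.Iio (w.symm (Fin.last n))).image w

section Psi2

open Finset Equiv

variable {n j : ℕ}

lemma psi_prefSet (hj : j ≤ n) (S : Finset (Fin (n+1))) (hcard : S.card = j)
    (hcardT : ((Finset.univ.erase (Fin.last n)) \ S).card = n - j)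
    (hLS : Fin.last n ∉ S)
    (u : Equiv.Perm (Fin j)) (v : Equiv.Perm (Fin (n - j))) :
    prefSet n (psi hj S hcard hcardT hLS u v) = S := by
  have hsymm := psi_symm_last hj S hcard hcardT hLS u v
  ext x
  rw [prefSet, Finset.mem_image]
  constructor
  · rintro ⟨i, hi, rfl⟩
    rw [Finset.mem_Iio, Fin.lt_def, hsymm] at hi
    rw [psi_apply, psiFun_apply_lt hj S hcard hcardT u v i hi]
    exact (S.orderIsoOfFin hcard (u ⟨i, hi⟩)).2
  · intro hx
    set y := (S.orderIsoOfFin hcard).symm ⟨x, hx⟩ with hy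
    set z := u.symm y with hz
    have hzj : (z : ℕ) < j := z.isLt
    refine ⟨⟨(z : ℕ), by omega⟩, ?_, ?_⟩
    · rw [Finset.mem_Iio, Fin.lt_def]
      show (z : ℕ) < _
      omega
    · rw [psi_apply, psiFun_apply_lt hj S hcard hcardT u v _ hzj]
      have : (⟨(z : ℕ), hzj⟩ : Fin j) = z := rfl
      rw [this, hz, Equiv.apply_symm_apply, hy, OrderIso.apply_symm_apply]

lemma psi_prop (hj : j ≤ n) (S : Finset (Fin (n+1))) (hcard : S.card = j)
    (hcardT : ((Finset.univ.erase (Fin.last n)) \ S).card = n - j)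
    (hLS : Fin.last n ∉ S)
    (u u' : Equiv.Perm (Fin j)) (v v' : Equiv.Perm (Fin (n - j)))
    (h : psi hj S hcard hcardT hLS u v = psi hj S hcard hcardT hLS u' v') :
    u = u' ∧ v = v' := by
  constructor
  · ext x
    have hx : ((⟨(x : ℕ), by omega⟩ : Fin (n+1)) : ℕ) < j := x.isLt
    have h1 := congrArg (fun e : Equiv.Perm (Fin (n+1)) => e ⟨(x : ℕ), by omega⟩) h
    simp only [psi_apply] at h1
    rw [psiFun_apply_lt hj S hcard hcardT u v _ hx,
      psiFun_apply_lt hj S hcard hcardT u' v' _ hx] at h1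
    have h2 := (S.orderIsoOfFin hcard).injective (Subtype.coe_injective h1)
    have : (⟨((⟨(x : ℕ), by omega⟩ : Fin (n+1)) : ℕ), hx⟩ : Fin j) = x := rfl
    rw [this] at h2
    exact congrArg Fin.val h2
  · ext x
    have hxlt : (x : ℕ) < n - j := x.isLt
    set i0 : Fin (n+1) := ⟨j + 1 + (x : ℕ), by omega⟩ with hi0
    have hgt : j < (i0 : ℕ) := by show j < j + 1 + (x : ℕ); omega
    have hsub : (i0 : ℕ) - j - 1 < n - j := by
      show j + 1 + (x : ℕ) - j - 1 < n - j; omega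
    have h1 := congrArg (fun e : Equiv.Perm (Fin (n+1)) => e i0) h
    simp only [psi_apply] at h1
    rw [psiFun_apply_gt hj S hcard hcardT u v i0 hgt hsub,
      psiFun_apply_gt hj S hcard hcardT u' v' i0 hgt hsub] at h1
    have h2 := (((Finset.univ.erase (Fin.last n)) \ S).orderIsoOfFin hcardT).injective
      (Subtype.coe_injective h1)
    have h3 := congrArg Fin.val h2
    convert h3 using 3 <;>
      (apply Fin.ext; show (x : ℕ) = (i0 : ℕ) - j - 1;
        show (x : ℕ) = j + 1 + (x : ℕ) - j - 1; omega)
lemma psi_surj (hj : j ≤ n) (S : Finset (Fin (n+1))) (hcard : S.card = j)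
    (hcardT : ((Finset.univ.erase (Fin.last n)) \ S).card = n - j)
    (hLS : Fin.last n ∉ S)
    (w : Equiv.Perm (Fin (n+1)))
    (hw1 : ((w.symm (Fin.last n)) : ℕ) = j) (hw2 : prefSet n w = S) :
    ∃ (u : Equiv.Perm (Fin j)) (v : Equiv.Perm (Fin (n - j))),
      psi hj S hcard hcardT hLS u v = w := by
  classical
  subst hw2
  have hmemS : ∀ x : Fin j, w ⟨(x : ℕ), by omega⟩ ∈ prefSet n w := by
    intro x
    unfold prefSet
    rw [Finset.mem_image]
    refine ⟨⟨(x : ℕ), by omega⟩, ?_, rfl⟩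
    rw [Finset.mem_Iio, Fin.lt_def]
    show (x : ℕ) < ((w.symm (Fin.last n)) : ℕ)
    omega
  have hmemT : ∀ x : Fin (n - j), w ⟨j + 1 + (x : ℕ), by have := x.isLt; omega⟩
      ∈ (Finset.univ.erase (Fin.last n)) \ prefSet n w := by
    intro x
    have hxlt := x.isLt
    rw [Finset.mem_sdiff, Finset.mem_erase]
    refine ⟨⟨?_, Finset.mem_univ _⟩, ?_⟩
    · intro hlast
      have h0 := congrArg (fun y => ((w.symm y) : ℕ)) hlast
      simp only [Equiv.symm_apply_apply] at h0
      rw [hw1] at h0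
      have h0' : j + 1 + (x : ℕ) = j := h0
      omega
    · intro hmem
      unfold prefSet at hmem
      rw [Finset.mem_image] at hmem
      obtain ⟨i0, hi0, heq⟩ := hmem
      rw [Finset.mem_Iio, Fin.lt_def, hw1] at hi0
      have h0 := w.injective heq
      have h1 := congrArg Fin.val h0
      simp only at h1
      omega
  set uFun : Fin j → Fin j :=
    fun x => ((prefSet n w).orderIsoOfFin hcard).symm ⟨w ⟨(x : ℕ), by omega⟩, hmemS x⟩ with huFun
  have uInj : Function.Injective uFun := by
    intro a b hab
    rw [huFun] at hab
    have h1 := congrArg (fun y => ((((prefSet n w).orderIsoOfFin hcard) y) : Fin (n+1))) hab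
    simp only [OrderIso.apply_symm_apply] at h1
    have h2 := w.injective h1
    have h3 := congrArg Fin.val h2
    exact Fin.ext h3
  set vFun : Fin (n - j) → Fin (n - j) :=
    fun x => (((Finset.univ.erase (Fin.last n)) \ prefSet n w).orderIsoOfFin hcardT).symm
      ⟨w ⟨j + 1 + (x : ℕ), by have := x.isLt; omega⟩, hmemT x⟩ with hvFun
  have vInj : Function.Injective vFun := by
    intro a b hab
    rw [hvFun] at hab
    have h1 := congrArg
      (fun y => ((((Finset.univ.erase (Fin.last n)) \ prefSet n w).orderIsoOfFin hcardT y)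
        : Fin (n+1))) hab
    simp only [OrderIso.apply_symm_apply] at h1
    have h2 := w.injective h1
    have h3 := congrArg Fin.val h2
    simp only at h3
    exact Fin.ext (by omega)
  refine ⟨Equiv.ofBijective uFun (Finite.injective_iff_bijective.mp uInj),
    Equiv.ofBijective vFun (Finite.injective_iff_bijective.mp vInj), ?_⟩
  ext i
  rw [psi_apply]
  have hiv := i.isLt
  rcases lt_trichotomy (i : ℕ) j with c | c | c
  · rw [psiFun_apply_lt _ _ _ _ _ _ _ c]
    show (((((prefSet n w).orderIsoOfFin hcard) (uFun ⟨(i : ℕ), c⟩)) : Fin (n+1)) : ℕ)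
      = ((w i : Fin (n+1)) : ℕ)
    rw [huFun]
    simp only [OrderIso.apply_symm_apply]
  · rw [psiFun_apply_eq _ _ _ _ _ _ _ c]
    have h0 : w.symm (Fin.last n) = i := Fin.ext (by rw [hw1]; omega)
    rw [← h0, Equiv.apply_symm_apply]
  · rw [psiFun_apply_gt _ _ _ _ _ _ _ c (by omega)]
    show (((((Finset.univ.erase (Fin.last n)) \ prefSet n w).orderIsoOfFin hcardT)
      (vFun ⟨(i : ℕ) - j - 1, by omega⟩) : Fin (n+1)) : ℕ) = ((w i : Fin (n+1)) : ℕ)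
    rw [hvFun]
    simp only [OrderIso.apply_symm_apply]
    have he : (⟨j + 1 + ((i : ℕ) - j - 1), by omega⟩ : Fin (n+1)) = i :=
      Fin.ext (by show j + 1 + ((i : ℕ) - j - 1) = (i : ℕ); omega)
    exact congrArg (fun z : Fin (n+1) => (w z : ℕ)) he
end Psi2

lemma fiber_card (n j k : ℕ) (hj : j ≤ n) (S : Finset (Fin (n+1)))
    (hSmem : S ∈ (Finset.univ.erase (Fin.last n)).powersetCard j) :
    ((Finset.univ.filter (fun w : Equiv.Perm (Fin (n+1)) =>
        asLen (n+1) w = k ∧ ((w.symm (Fin.last n)) : ℕ) = j)).filter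
          (fun w => prefSet n w = S)).card
      = (Finset.univ.filter (fun p : Equiv.Perm (Fin j) × Equiv.Perm (Fin (n-j)) =>
        2 * (asLen j p.1 / 2) + 1 + altLen 1 (permList (n-j) p.2) = k)).card := by
  classical
  rw [Finset.mem_powersetCard] at hSmem
  obtain ⟨hSsub, hcard⟩ := hSmem
  have hLS : Fin.last n ∉ S := fun h => absurd (hSsub h) (by simp)
  have hcardT : ((Finset.univ.erase (Fin.last n)) \ S).card = n - j := by
    rw [Finset.card_sdiff_of_subset hSsub, hcard]
    rw [Finset.card_erase_of_mem (Finset.mem_univ _), Finset.card_univ, Fintype.card_fin]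
    omega
  rw [Finset.filter_filter]
  symm
  apply Finset.card_bij (fun p _ => psi hj S hcard hcardT hLS p.1 p.2)
  · intro p hp
    simp only [Finset.mem_filter, Finset.mem_univ, true_and] at hp ⊢
    exact ⟨⟨by rw [psi_asLen hj S hcard hcardT hLS hSsub p.1 p.2]; exact hp,
      psi_symm_last hj S hcard hcardT hLS p.1 p.2⟩, psi_prefSet hj S hcard hcardT hLS p.1 p.2⟩
  · intro p1 hp1 p2 hp2 heq
    obtain ⟨h1, h2⟩ := psi_prop hj S hcard hcardT hLS p1.1 p2.1 p1.2 p2.2 heq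
    exact Prod.ext h1 h2
  · intro w hw
    simp only [Finset.mem_filter, Finset.mem_univ, true_and] at hw
    obtain ⟨⟨hk', hj'⟩, hS'⟩ := hw
    obtain ⟨u, v, huv⟩ := psi_surj hj S hcard hcardT hLS w hj' hS'
    refine ⟨(u, v), ?_, huv⟩
    simp only [Finset.mem_filter, Finset.mem_univ, true_and]
    rw [← huv] at hk'
    rw [psi_asLen hj S hcard hcardT hLS hSsub u v] at hk'
    exact hk'

theorem main_count (n k : ℕ) (hk : 1 ≤ k) :
    aCount (n+1) k =
      ∑ j ∈ Finset.range (n + 1), Nat.choose n j *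
        ∑ r ∈ Finset.range ((k - 1) / 2 + 1),
          (aCount j (2 * r) + aCount j (2 * r + 1)) *
            aCount (n - j) (k - 1 - 2 * r) := by
  classical
  rw [aCount, Nat.card_eq_fintype_card, Fintype.card_subtype]
  rw [Finset.card_eq_sum_card_fiberwise
    (f := fun w : Equiv.Perm (Fin (n+1)) => ((w.symm (Fin.last n)) : ℕ))
    (t := Finset.range (n+1)) (fun w _ => Finset.mem_range.mpr (w.symm (Fin.last n)).isLt)]
  apply Finset.sum_congr rfl
  intro j hjmem
  rw [Finset.mem_range] at hjmem
  have hj' : j ≤ n := by omega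
  rw [Finset.filter_filter]
  rw [Finset.card_eq_sum_card_fiberwise (f := prefSet n)
    (t := (Finset.univ.erase (Fin.last n)).powersetCard j)
    (by
      intro w hw
      rw [Finset.mem_coe, Finset.mem_filter] at hw
      obtain ⟨-, -, hpos⟩ := hw
      rw [Finset.mem_coe, Finset.mem_powersetCard]
      constructor
      · intro x hx
        rw [prefSet, Finset.mem_image] at hx
        obtain ⟨i, hi, rfl⟩ := hx
        rw [Finset.mem_Iio] at hi
        rw [Finset.mem_erase]
        refine ⟨?_, Finset.mem_univ _⟩
        intro hlast
        have h2 := (Equiv.symm_apply_eq w).mpr hlast.symm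
        exact lt_irrefl _ (h2 ▸ hi)
      · rw [prefSet, Finset.card_image_of_injective _ w.injective, Fin.card_Iio]
        exact hpos)]
  rw [← inner_count j (n-j) k hk]
  rw [Finset.sum_congr rfl (fun S hS => fiber_card n j k hj' S hS), Finset.sum_const,
    smul_eq_mul, Finset.card_powersetCard,
    Finset.card_erase_of_mem (Finset.mem_univ _), Finset.card_univ, Fintype.card_fin,
    Nat.add_sub_cancel]

theorem aCount_recurrence (n k : ℕ) (hk : 1 ≤ k) (hkn : k ≤ n + 1) :
    aCount 0 0 = 1 ∧
    aCount (n + 1) k =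
      ∑ j ∈ Finset.range (n + 1), Nat.choose n j *
        ∑ r ∈ Finset.range ((k - 1) / 2 + 1),
          (aCount j (2 * r) + aCount j (2 * r + 1)) *
            aCount (n - j) (k - 1 - 2 * r) := by
  exact ⟨aCount_zero_zero, main_count n k hk⟩
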